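/- Let n ≥ 2 and let G be the graph obtained from the complete graph K_n by adding, for every edge e of K_n, a new vertex u_e adjacent exactly to the two endpoints of e. Then G is well-f-covered and f(G) = n(n-1)/2 + 1. -/

import Mathlib

open SimpleGraph Walk


/-- `X` induces a forest in `G`: the subgraph induced by `X` is acyclic. -/
def IsInducedForest {V : Type*} (G : SimpleGraph V) (X : Finset V) : Prop :=
  (G.induce (X : Set V)).IsAcyclic

/-- `X` is a maximal induced forest of `G`. -/
def IsMaximalInducedForest {V : Type*} (G : SimpleGraph V) (X : Finset V) : Prop :=
  IsInducedForest G X ∧ ∀ Y : Finset V, X ⊂ Y → ¬ IsInducedForest G Y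

/-- The forest number of `G`: maximum cardinality of an induced forest. -/
noncomputable def forestNum {V : Type*} (G : SimpleGraph V) : ℕ :=
  sSup {n | ∃ X : Finset V, IsInducedForest G X ∧ X.card = n}

/-- `G` is well-f-covered: all maximal induced forests have the same cardinality. -/
def WellFCovered {V : Type*} (G : SimpleGraph V) : Prop :=
  ∀ X Y : Finset V, IsMaximalInducedForest G X → IsMaximalInducedForest G Y →
    X.card = Y.card

def IsIndepFinset {V : Type*} (G : SimpleGraph V) (X : Finset V) : Prop :=
  ∀ ⦃u⦄, u ∈ X → ∀ ⦃v⦄, v ∈ X → ¬ G.Adj u v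

def IsMaximalIndepSet {V : Type*} (G : SimpleGraph V) (X : Finset V) : Prop :=
  IsIndepFinset G X ∧ ∀ Y : Finset V, X ⊂ Y → ¬ IsIndepFinset G Y

noncomputable def indepNum {V : Type*} (G : SimpleGraph V) : ℕ :=
  sSup {n | ∃ X : Finset V, IsIndepFinset G X ∧ X.card = n}

def WellCovered {V : Type*} (G : SimpleGraph V) : Prop :=
  ∀ X Y : Finset V, IsMaximalIndepSet G X → IsMaximalIndepSet G Y → X.card = Y.card

/-- The join of two graphs on disjoint vertex sets. -/
def joinGraph {V W : Type*} (G : SimpleGraph V) (H : SimpleGraph W) :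
    SimpleGraph (V ⊕ W) where
  Adj a b :=
    match a, b with
    | Sum.inl u, Sum.inl v => G.Adj u v
    | Sum.inr u, Sum.inr v => H.Adj u v
    | Sum.inl _, Sum.inr _ => True
    | Sum.inr _, Sum.inl _ => True
  symm := by constructor; rintro (u|u) (v|v) h <;> first | exact h.symm | trivial
  loopless := by constructor; rintro (u|u) h <;> exact SimpleGraph.irrefl _ h

/-- The graph obtained from the complete graph on `Fin n` by adding, for each
2-element subset `e` of `Fin n`, a new vertex adjacent exactly to the two elements
of `e`. -/
def completePlusEdgeVertices (n : ℕ) :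
    SimpleGraph (Fin n ⊕ {e : Finset (Fin n) // e.card = 2}) :=
  SimpleGraph.fromRel fun a b =>
    match a, b with
    | Sum.inl i, Sum.inl j => i ≠ j
    | Sum.inl i, Sum.inr e => i ∈ e.val
    | Sum.inr _, _ => False

lemma triangle_not_acyclic {W : Type*} {H : SimpleGraph W} {a b c : W}
    (hab : H.Adj a b) (hbc : H.Adj b c) (hca : H.Adj c a) : ¬ H.IsAcyclic := by
  intro h
  refine h (Walk.cons hab (Walk.cons hbc (Walk.cons hca Walk.nil))) ?_
  have h1 : a ≠ b := hab.ne
  have h2 : b ≠ c := hbc.ne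
  have h3 : c ≠ a := hca.ne
  rw [Walk.isCycle_def]
  refine ⟨?_, by simp, ?_⟩
  · rw [Walk.isTrail_def]
    simp only [Walk.edges_cons, Walk.edges_nil, List.nodup_cons, List.mem_cons,
      List.not_mem_nil, or_false, List.nodup_nil, and_true, Sym2.eq_iff]
    constructor
    · rintro (⟨rfl, rfl⟩ | ⟨rfl, rfl⟩) <;> simp_all
    · constructor
      · rintro (⟨rfl, rfl⟩ | ⟨rfl, rfl⟩) <;> simp_all
      · trivial
  · simp [h1, h2, h3, h1.symm, h2.symm, h3.symm]

lemma acyclic_of_aux {W : Type*} {H : SimpleGraph W} (A : W → Prop)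
    (h2 : ∀ u v w, A u → A v → A w → u = v ∨ u = w ∨ v = w)
    (h3 : ∀ w, ¬ A w → ∀ x y, H.Adj w x → H.Adj w y → x = y) :
    H.IsAcyclic := by
  classical
  intro v c hc
  have h3len : 3 ≤ c.length := hc.three_le_length
  obtain ⟨w, hw, hnA⟩ : ∃ w ∈ c.support, ¬ A w := by
    by_contra h
    push_neg at h
    have hnd : c.support.tail.Nodup := hc.support_nodup
    have hlen : c.support.tail.length = c.length := by
      have := c.length_support
      cases hs : c.support with
      | nil => simp [hs] at this
      | cons x l => simp [hs] at this ⊢; omega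
    have hcard : 2 < c.support.tail.toFinset.card := by
      rw [List.toFinset_card_of_nodup hnd, hlen]; omega
    obtain ⟨x, y, z, hx, hy, hz, hxy, hxz, hyz⟩ := Finset.two_lt_card_iff.mp hcard
    simp only [List.mem_toFinset] at hx hy hz
    have hxs : x ∈ c.support := List.mem_of_mem_tail hx
    have hys : y ∈ c.support := List.mem_of_mem_tail hy
    have hzs : z ∈ c.support := List.mem_of_mem_tail hz
    rcases h2 x y z (h x hxs) (h y hys) (h z hzs) with h' | h' | h' <;> tauto
  have hc' : (c.rotate w hw).IsCycle := hc.rotate hw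
  obtain ⟨y, hadj, q, heq⟩ := Walk.not_nil_iff.mp hc'.not_nil
  rw [heq] at hc'
  rw [SimpleGraph.Walk.cons_isCycle_iff] at hc'
  obtain ⟨hq, he⟩ := hc'
  have hqlen : 0 < q.length := by
    by_contra h0
    push_neg at h0
    interval_cases h : q.length
    · exact hadj.ne (Walk.eq_of_length_eq_zero h).symm
  have hqrev : ¬ q.reverse.Nil := by
    rw [Walk.not_nil_iff_lt_length]; simpa using hqlen
  obtain ⟨z, hadj', q', hq'⟩ := Walk.not_nil_iff.mp hqrev
  have hyz : y = z := h3 w hnA y z hadj hadj'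
  subst hyz
  apply he
  have : s(w, y) ∈ q.reverse.edges := by rw [hq']; simp [Sym2.eq_swap]
  rw [Walk.edges_reverse, List.mem_reverse] at this
  exact this


section CPE
variable {n : ℕ}

abbrev EV (n : ℕ) := {e : Finset (Fin n) // e.card = 2}

lemma cpe_adj_inl_inl {i j : Fin n} :
    (completePlusEdgeVertices n).Adj (Sum.inl i) (Sum.inl j) ↔ i ≠ j := by
  simp only [completePlusEdgeVertices, SimpleGraph.fromRel_adj]
  constructor
  · rintro ⟨h, _⟩ rfl; exact h rfl
  · intro h; exact ⟨by simpa using h, Or.inl h⟩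

lemma cpe_adj_inl_inr {i : Fin n} {e : EV n} :
    (completePlusEdgeVertices n).Adj (Sum.inl i) (Sum.inr e) ↔ i ∈ e.val := by
  simp [completePlusEdgeVertices, SimpleGraph.fromRel_adj]

lemma cpe_adj_inr_inl {i : Fin n} {e : EV n} :
    (completePlusEdgeVertices n).Adj (Sum.inr e) (Sum.inl i) ↔ i ∈ e.val := by
  rw [SimpleGraph.adj_comm]; exact cpe_adj_inl_inr

lemma cpe_adj_inr_inr {e f : EV n} :
    ¬ (completePlusEdgeVertices n).Adj (Sum.inr e) (Sum.inr f) := by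
  simp [completePlusEdgeVertices, SimpleGraph.fromRel_adj]

/-- combinatorial characterization of forests in `completePlusEdgeVertices n` -/
def Good (n : ℕ) (X : Finset (Fin n ⊕ EV n)) : Prop :=
  (∀ i j k : Fin n, Sum.inl i ∈ X → Sum.inl j ∈ X → Sum.inl k ∈ X →
      i = j ∨ i = k ∨ j = k) ∧
  (∀ (i j : Fin n) (e : EV n), Sum.inl i ∈ X → Sum.inl j ∈ X → Sum.inr e ∈ X →
      i ∈ e.val → j ∈ e.val → i = j)

lemma forest_iff_good (X : Finset (Fin n ⊕ EV n)) :
    IsInducedForest (completePlusEdgeVertices n) X ↔ Good n X := by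
  unfold IsInducedForest
  constructor
  · intro hF
    constructor
    · intro i j k hi hj hk
      by_contra h
      push_neg at h
      obtain ⟨hij, hik, hjk⟩ := h
      refine triangle_not_acyclic
        (H := SimpleGraph.induce (X : Set _) (completePlusEdgeVertices n))
        (a := ⟨Sum.inl i, Finset.mem_coe.mpr hi⟩)
        (b := ⟨Sum.inl j, Finset.mem_coe.mpr hj⟩)
        (c := ⟨Sum.inl k, Finset.mem_coe.mpr hk⟩) ?_ ?_ ?_ hF <;>
        exact SimpleGraph.comap_adj.mpr (cpe_adj_inl_inl.mpr (by tauto))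
    · intro i j e hi hj he hie hje
      by_contra hij
      refine triangle_not_acyclic
        (H := SimpleGraph.induce (X : Set _) (completePlusEdgeVertices n))
        (a := ⟨Sum.inl i, Finset.mem_coe.mpr hi⟩)
        (b := ⟨Sum.inl j, Finset.mem_coe.mpr hj⟩)
        (c := ⟨Sum.inr e, Finset.mem_coe.mpr he⟩) ?_ ?_ ?_ hF
      · exact SimpleGraph.comap_adj.mpr (cpe_adj_inl_inl.mpr hij)
      · exact SimpleGraph.comap_adj.mpr (cpe_adj_inl_inr.mpr hje)
      · exact SimpleGraph.comap_adj.mpr (cpe_adj_inr_inl.mpr hie)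
  · rintro ⟨g1, g2⟩
    refine acyclic_of_aux (A := fun w => (w : Fin n ⊕ EV n).isLeft) ?_ ?_
    · rintro ⟨(u|u), hu⟩ ⟨(v|v), hv⟩ ⟨(w|w), hw⟩ _ _ _ <;> simp_all
      rcases g1 u v w hu hv hw with h | h | h <;> simp [h]
    · rintro ⟨(w|e), hw⟩ hA x y hx hy
      · simp at hA
      · match x, y with
        | ⟨Sum.inl a, ha⟩, ⟨Sum.inl b, hb⟩ =>
          have h1 : a ∈ e.val := cpe_adj_inr_inl.mp hx
          have h2 : b ∈ e.val := cpe_adj_inr_inl.mp hy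
          have := g2 a b e ha hb hw h1 h2
          simp [this]
        | ⟨Sum.inl a, ha⟩, ⟨Sum.inr f, hf⟩ => exact absurd hy cpe_adj_inr_inr
        | ⟨Sum.inr f, hf⟩, _ => exact absurd hx cpe_adj_inr_inr

lemma good_card_le (hn : 2 ≤ n) (X : Finset (Fin n ⊕ EV n)) (hX : Good n X) :
    X.card ≤ Fintype.card (EV n) + 1 := by
  classical
  set N := Fintype.card (EV n)
  have hNpos : 1 ≤ N := by
    refine Fintype.card_pos_iff.mpr ⟨⟨{⟨0, by omega⟩, ⟨1, by omega⟩}, ?_⟩⟩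
    rw [Finset.card_pair]
    simp [Fin.ext_iff]
  rw [← Finset.card_toLeft_add_card_toRight]
  by_cases h2 : 2 ≤ X.toLeft.card
  · obtain ⟨i, hi, j, hj, hij⟩ := Finset.one_lt_card.mp h2
    rw [Finset.mem_toLeft] at hi hj
    have hsub : X.toLeft ⊆ {i, j} := by
      intro k hk
      rw [Finset.mem_toLeft] at hk
      rcases hX.1 i j k hi hj hk with h | h | h
      · exact absurd h hij
      · simp [← h]
      · simp [← h]
    have hL : X.toLeft.card ≤ 2 := le_trans (Finset.card_le_card hsub)
      (le_of_eq (Finset.card_pair hij))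
    have hE : (⟨{i, j}, Finset.card_pair hij⟩ : EV n) ∉ X.toRight := by
      intro hE
      rw [Finset.mem_toRight] at hE
      exact hij (hX.2 i j _ hi hj hE (by simp) (by simp))
    have hR : X.toRight.card ≤ N - 1 := by
      have : X.toRight ⊆ Finset.univ.erase ⟨{i, j}, Finset.card_pair hij⟩ := by
        intro e he
        exact Finset.mem_erase.mpr ⟨fun h => hE (h ▸ he), Finset.mem_univ _⟩
      calc X.toRight.card ≤ _ := Finset.card_le_card this
        _ = N - 1 := by rw [Finset.card_erase_of_mem (Finset.mem_univ _), Finset.card_univ]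
    omega
  · have hR : X.toRight.card ≤ N := Finset.card_le_univ _
    omega

lemma maximal_card (hn : 2 ≤ n) (X : Finset (Fin n ⊕ EV n))
    (hX : IsMaximalInducedForest (completePlusEdgeVertices n) X) :
    X.card = Fintype.card (EV n) + 1 := by
  classical
  set N := Fintype.card (EV n)
  obtain ⟨hF, hmax⟩ := hX
  have hG : Good n X := (forest_iff_good X).mp hF
  have hins : ∀ v ∉ X, ¬ Good n (insert v X) := fun v hv hg =>
    hmax _ (Finset.ssubset_insert hv) ((forest_iff_good _).mpr hg)
  rw [← Finset.card_toLeft_add_card_toRight]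
  by_cases h2 : ∃ i j : Fin n, i ≠ j ∧ Sum.inl i ∈ X ∧ Sum.inl j ∈ X
  · obtain ⟨i, j, hij, hi, hj⟩ := h2
    set E : EV n := ⟨{i, j}, Finset.card_pair hij⟩ with hEdef
    have hLeq : X.toLeft = {i, j} := by
      apply Finset.Subset.antisymm
      · intro k hk
        rw [Finset.mem_toLeft] at hk
        rcases hG.1 i j k hi hj hk with h | h | h
        · exact absurd h hij
        · simp [← h]
        · simp [← h]
      · intro k hk
        rw [Finset.mem_toLeft]
        rcases Finset.mem_insert.mp hk with rfl | hk
        · exact hi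
        · rw [Finset.mem_singleton] at hk; subst hk; exact hj
    have hE : Sum.inr E ∉ X := by
      intro hE
      exact hij (hG.2 i j E hi hj hE (by simp [hEdef]) (by simp [hEdef]))
    have hReq : X.toRight = Finset.univ.erase E := by
      apply Finset.Subset.antisymm
      · intro e he
        rw [Finset.mem_toRight] at he
        refine Finset.mem_erase.mpr ⟨fun h => hE (h ▸ he), Finset.mem_univ _⟩
      · intro e he
        obtain ⟨hne, -⟩ := Finset.mem_erase.mp he
        rw [Finset.mem_toRight]
        by_contra hout
        refine hins _ hout ⟨?_, ?_⟩
        · intro a b c ha hb hc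
          exact hG.1 a b c (by simpa using ha) (by simpa using hb) (by simpa using hc)
        · intro a b f ha hb hf haf hbf
          rw [Finset.mem_insert] at ha hb hf
          replace ha : Sum.inl a ∈ X := by tauto
          replace hb : Sum.inl b ∈ X := by tauto
          rcases hf with hf | hf
          · -- f = e
            obtain rfl : f = e := Sum.inr.inj hf
            by_contra hab
            -- a, b ∈ {i, j}, distinct, so {a,b} = {i,j} ⊆ f.val, so f = E
            have haL : a ∈ ({i, j} : Finset (Fin n)) := hLeq ▸ Finset.mem_toLeft.mpr ha
            have hbL : b ∈ ({i, j} : Finset (Fin n)) := hLeq ▸ Finset.mem_toLeft.mpr hb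
            have hsub : ({i, j} : Finset (Fin n)) ⊆ f.val := by
              intro k hk
              rcases Finset.mem_insert.mp hk with rfl | hk
              · rcases Finset.mem_insert.mp haL with rfl | haL
                · exact haf
                · rw [Finset.mem_singleton] at haL
                  rcases Finset.mem_insert.mp hbL with rfl | hbL
                  · exact hbf
                  · rw [Finset.mem_singleton] at hbL
                    exact absurd (haL.trans hbL.symm) hab
              · rw [Finset.mem_singleton] at hk; subst hk
                rcases Finset.mem_insert.mp haL with rfl | haL
                · rcases Finset.mem_insert.mp hbL with rfl | hbL
                  · exact absurd rfl hab
                  · rw [Finset.mem_singleton] at hbL; subst hbL; exact hbf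
                · rw [Finset.mem_singleton] at haL; subst haL; exact haf
            have : ({i, j} : Finset (Fin n)) = f.val :=
              Finset.eq_of_subset_of_card_le hsub (by rw [f.prop, Finset.card_pair hij])
            exact hne (Subtype.ext this.symm)
          · exact hG.2 a b f ha hb hf haf hbf
    rw [hLeq, hReq, Finset.card_pair hij,
      Finset.card_erase_of_mem (Finset.mem_univ _), Finset.card_univ]
    have hNpos : 1 ≤ N := Fintype.card_pos_iff.mpr ⟨E⟩
    omega
  · push_neg at h2
    have hone : ∀ a b : Fin n, Sum.inl a ∈ X → Sum.inl b ∈ X → a = b := by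
      intro a b ha hb
      by_contra hab
      exact (h2 a b hab) ha hb
    have hReq : X.toRight = Finset.univ := by
      apply Finset.eq_univ_of_forall
      intro e
      rw [Finset.mem_toRight]
      by_contra hout
      refine hins _ hout ⟨?_, ?_⟩
      · intro a b c ha hb hc
        simp only [Finset.mem_insert, reduceCtorEq, false_or] at ha hb
        exact Or.inl (hone a b ha hb)
      · intro a b f ha hb hf haf hbf
        simp only [Finset.mem_insert, reduceCtorEq, false_or] at ha hb
        exact hone a b ha hb
    have hLone : ∃ i : Fin n, Sum.inl i ∈ X := by
      by_contra hno
      push_neg at hno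
      refine hins (Sum.inl ⟨0, by omega⟩) (hno _) ⟨?_, ?_⟩
      · intro a b c ha hb hc
        rcases Finset.mem_insert.mp ha with ha | ha
        · rcases Finset.mem_insert.mp hb with hb | hb
          · exact Or.inl ((Sum.inl.inj ha).trans (Sum.inl.inj hb).symm)
          · exact absurd hb (hno b)
        · exact absurd ha (hno a)
      · intro a b f ha hb hf haf hbf
        rcases Finset.mem_insert.mp ha with ha | ha
        · rcases Finset.mem_insert.mp hb with hb | hb
          · exact (Sum.inl.inj ha).trans (Sum.inl.inj hb).symm
          · exact absurd hb (hno b)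
        · exact absurd ha (hno a)
    obtain ⟨i, hi⟩ := hLone
    have hLeq : X.toLeft = {i} := by
      apply Finset.Subset.antisymm
      · intro k hk
        rw [Finset.mem_toLeft] at hk
        exact Finset.mem_singleton.mpr (hone k i hk hi)
      · intro k hk
        rw [Finset.mem_singleton] at hk; subst hk
        exact Finset.mem_toLeft.mpr hi
    rw [hLeq, hReq, Finset.card_singleton, Finset.card_univ]
    omega

lemma exists_good_card (hn : 2 ≤ n) :
    ∃ X : Finset (Fin n ⊕ EV n), IsInducedForest (completePlusEdgeVertices n) X ∧
      X.card = Fintype.card (EV n) + 1 := by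
  classical
  set i0 : Fin n := ⟨0, by omega⟩
  refine ⟨insert (Sum.inl i0) (Finset.univ.image Sum.inr), ?_, ?_⟩
  · rw [forest_iff_good]
    constructor
    · intro a b c ha hb hc
      simp only [Finset.mem_insert, Finset.mem_image, reduceCtorEq, and_false,
        exists_false, or_false, Sum.inl.injEq] at ha hb
      exact Or.inl (ha.trans hb.symm)
    · intro a b f ha hb hf haf hbf
      simp only [Finset.mem_insert, Finset.mem_image, reduceCtorEq, and_false,
        exists_false, or_false, Sum.inl.injEq] at ha hb
      exact ha.trans hb.symm
  · rw [Finset.card_insert_of_notMem (by simp), Finset.card_image_of_injective _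
      Sum.inr_injective, Finset.card_univ]

end CPE

/-- For `n ≥ 2`, the graph obtained from `K_n` by adding, for every edge
`e` of `K_n`, a new vertex `u_e` adjacent exactly to the endpoints of `e`, is
well-f-covered with forest number `n(n-1)/2 + 1`. -/
theorem stmt11 (n : ℕ) (hn : 2 ≤ n) :
    WellFCovered (completePlusEdgeVertices n) ∧
      forestNum (completePlusEdgeVertices n) = n * (n - 1) / 2 + 1 := by
  classical
  set N := Fintype.card (EV n) with hN
  have hNval : N = n * (n - 1) / 2 := by
    rw [hN, Fintype.card_finset_len, Fintype.card_fin, Nat.choose_two_right]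
  constructor
  · intro X Y hX hY
    rw [maximal_card hn X hX, maximal_card hn Y hY]
  · unfold forestNum
    obtain ⟨X0, hX0F, hX0c⟩ := exists_good_card hn
    have hmem : N + 1 ∈ {m | ∃ X : Finset (Fin n ⊕ EV n),
        IsInducedForest (completePlusEdgeVertices n) X ∧ X.card = m} := ⟨X0, hX0F, hX0c⟩
    have hub : ∀ m ∈ {m | ∃ X : Finset (Fin n ⊕ EV n),
        IsInducedForest (completePlusEdgeVertices n) X ∧ X.card = m}, m ≤ N + 1 := by
      rintro m ⟨X, hF, rfl⟩
      exact good_card_le hn X ((forest_iff_good X).mp hF)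
    have : sSup {m | ∃ X : Finset (Fin n ⊕ EV n),
        IsInducedForest (completePlusEdgeVertices n) X ∧ X.card = m} = N + 1 :=
      le_antisymm (csSup_le ⟨_, hmem⟩ hub) (le_csSup ⟨N + 1, hub⟩ hmem)
    rw [this, hNval]
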